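/- Let (Ω, μ) be a probability space, let d be a natural number, let Q_f, Q* : {0,1} × Ω → (0,1) be measurable with contrasts Δ_f(w) = Q_f(1,w) − Q_f(0,w) and Δ*(w) = Q*(1,w) − Q*(0,w), and let L_Y = ∫_Ω Σ_{a∈{0,1}} [Q*(a,w)·log(Q*(a,w)/Q_f(a,w)) + (1−Q*(a,w))·log((1−Q*(a,w))/(1−Q_f(a,w)))] dμ(w). Suppose there are real numbers L_W ≥ 0 and ε ≥ 0 such that L_W + L_Y/(d+1) ≤ ε. Then (∫_Ω (Δ_f(w) − Δ*(w))² dμ(w))^{1/2} ≤ 2·√((d+1)·ε). -/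

import Mathlib

open MeasureTheory

private noncomputable def gfun (p : ℝ) (x : ℝ) : ℝ :=
  p * Real.log p - p * Real.log x + (1 - p) * Real.log (1 - p)
    - (1 - p) * Real.log (1 - x) - 2 * (p - x) ^ 2

private lemma gfun_hasDerivAt {p x : ℝ} (hx : x ∈ Set.Ioo (0:ℝ) 1) :
    HasDerivAt (gfun p) (-(p / x) + (1 - p) / (1 - x) + 4 * (p - x)) x := by
  have hx0 : x ≠ 0 := ne_of_gt hx.1
  have h1x : (1:ℝ) - x ≠ 0 := by have := hx.2; intro h; linarith [sub_eq_zero.mp h]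
  have h1 : HasDerivAt (fun x : ℝ => p * Real.log x) (p * x⁻¹) x :=
    (Real.hasDerivAt_log hx0).const_mul p
  have hlin : HasDerivAt (fun x : ℝ => 1 - x) (-1) x := by
    simpa using (hasDerivAt_id x).const_sub 1
  have h2 : HasDerivAt (fun x : ℝ => (1 - p) * Real.log (1 - x))
      ((1 - p) * ((1 - x)⁻¹ * (-1))) x :=
    ((Real.hasDerivAt_log h1x).comp x hlin).const_mul (1 - p)
  have hpx : HasDerivAt (fun x : ℝ => p - x) (-1) x := by
    simpa using (hasDerivAt_id x).const_sub p
  have h3 : HasDerivAt (fun x : ℝ => 2 * (p - x) ^ 2)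
      (2 * ((2 : ℕ) * (p - x) ^ 1 * (-1))) x := (hpx.pow 2).const_mul 2
  have := (((hasDerivAt_const x (p * Real.log p)).sub h1).add
      (hasDerivAt_const x ((1 - p) * Real.log (1 - p)))).sub h2 |>.sub h3
  refine HasDerivAt.congr_deriv this ?_
  · field_simp
    ring

private lemma bern_pinsker {p q : ℝ} (hp : p ∈ Set.Ioo (0:ℝ) 1)
    (hq : q ∈ Set.Ioo (0:ℝ) 1) :
    2 * (p - q) ^ 2 ≤ p * Real.log (p / q) + (1 - p) * Real.log ((1 - p) / (1 - q)) := by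
  have hp0 := hp.1; have hp1 := hp.2
  have hq0 := hq.1; have hq1 := hq.2
  have hgp : gfun p p = 0 := by unfold gfun; ring
  have key : gfun p p ≤ gfun p q := by
    have hIoo : ∀ x, x ∈ Set.Ioo (0:ℝ) 1 → DifferentiableAt ℝ (gfun p) x :=
      fun x hx => (gfun_hasDerivAt hx).differentiableAt
    have hderiv : ∀ x, x ∈ Set.Ioo (0:ℝ) 1 →
        deriv (gfun p) x = ((x - p) * (1 - 2*x) ^ 2) / (x * (1 - x)) := by
      intro x hx
      rw [(gfun_hasDerivAt hx).deriv]
      have hx0 : x ≠ 0 := ne_of_gt hx.1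
      have h1x : (1:ℝ) - x ≠ 0 := by have := hx.2; intro h; linarith [sub_eq_zero.mp h]
      field_simp
      ring
    rcases le_total p q with h | h
    · have hsub : Set.Icc p q ⊆ Set.Ioo (0:ℝ) 1 :=
        fun x hx => ⟨lt_of_lt_of_le hp0 hx.1, lt_of_le_of_lt hx.2 hq1⟩
      have hmono : MonotoneOn (gfun p) (Set.Icc p q) := by
        apply monotoneOn_of_deriv_nonneg (convex_Icc p q)
        · exact fun x hx => (hIoo x (hsub hx)).continuousAt.continuousWithinAt
        · intro x hx
          rw [interior_Icc] at hx
          exact ((hIoo x (hsub (Set.Ioo_subset_Icc_self hx))).differentiableWithinAt)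
        · intro x hx
          rw [interior_Icc] at hx
          have hx' := hsub (Set.Ioo_subset_Icc_self hx)
          rw [hderiv x hx']
          apply div_nonneg
          · apply mul_nonneg (by linarith [hx.1]) (sq_nonneg _)
          · have := hx'.1; have := hx'.2; nlinarith
      exact hmono ⟨le_refl p, h⟩ ⟨h, le_refl q⟩ h
    · have hsub : Set.Icc q p ⊆ Set.Ioo (0:ℝ) 1 :=
        fun x hx => ⟨lt_of_lt_of_le hq0 hx.1, lt_of_le_of_lt hx.2 hp1⟩
      have hanti : AntitoneOn (gfun p) (Set.Icc q p) := by
        apply antitoneOn_of_deriv_nonpos (convex_Icc q p)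
        · exact fun x hx => (hIoo x (hsub hx)).continuousAt.continuousWithinAt
        · intro x hx
          rw [interior_Icc] at hx
          exact ((hIoo x (hsub (Set.Ioo_subset_Icc_self hx))).differentiableWithinAt)
        · intro x hx
          rw [interior_Icc] at hx
          have hx' := hsub (Set.Ioo_subset_Icc_self hx)
          rw [hderiv x hx']
          apply div_nonpos_of_nonpos_of_nonneg
          · apply mul_nonpos_of_nonpos_of_nonneg (by linarith [hx.2]) (sq_nonneg _)
          · have := hx'.1; have := hx'.2; nlinarith
      exact hanti ⟨le_refl q, h⟩ ⟨h, le_refl p⟩ h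
  rw [hgp] at key
  have hlog1 : Real.log (p / q) = Real.log p - Real.log q :=
    Real.log_div (ne_of_gt hp0) (ne_of_gt hq0)
  have hlog2 : Real.log ((1 - p) / (1 - q)) = Real.log (1 - p) - Real.log (1 - q) :=
    Real.log_div (by linarith) (by linarith)
  unfold gfun at key
  rw [hlog1, hlog2]
  nlinarith [key]

/-- On a probability space `(Ω, μ)`, for measurable conditional
outcome models `Q_f, Q* : {0,1} × Ω → (0,1)` with balanced Bernoulli KL outcome
loss `L_Y`, if the equal-weight joint reconstruction loss over a row with `d`
covariate coordinates is controlled, `L_W + L_Y/(d+1) ≤ ε` with `L_W ≥ 0` and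
`ε ≥ 0`, then the contrast error satisfies
`‖Δ_f − Δ*‖_{L²(μ)} ≤ 2·√((d+1)·ε)`. -/
theorem contrast_l2_from_joint_loss {Ω : Type*} [MeasurableSpace Ω]
    (μ : Measure Ω) [IsProbabilityMeasure μ] (d : ℕ)
    (Qf Qs : Bool → Ω → ℝ)
    (hQfm : ∀ a, Measurable (Qf a)) (hQsm : ∀ a, Measurable (Qs a))
    (hQf01 : ∀ a w, Qf a w ∈ Set.Ioo (0 : ℝ) 1)
    (hQs01 : ∀ a w, Qs a w ∈ Set.Ioo (0 : ℝ) 1)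
    (kl : Bool → Ω → ℝ)
    (hkl : ∀ a w, kl a w =
      Qs a w * Real.log (Qs a w / Qf a w) +
        (1 - Qs a w) * Real.log ((1 - Qs a w) / (1 - Qf a w)))
    (hklint : Integrable (fun w => kl true w + kl false w) μ)
    (LY : ℝ) (hLY : LY = ∫ w, (kl true w + kl false w) ∂μ)
    (LW ε : ℝ) (hLW : 0 ≤ LW) (hε : 0 ≤ ε)
    (hjoint : LW + LY / (d + 1) ≤ ε) :
    Real.sqrt (∫ w,
        ((Qf true w - Qf false w) - (Qs true w - Qs false w)) ^ 2 ∂μ) ≤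
      2 * Real.sqrt ((d + 1) * ε) := by
  set f : Ω → ℝ := fun w =>
    ((Qf true w - Qf false w) - (Qs true w - Qs false w)) ^ 2 with hf
  -- pointwise bound
  have hpt : ∀ w, f w ≤ kl true w + kl false w := by
    intro w
    have hpin : ∀ a, 2 * (Qs a w - Qf a w) ^ 2 ≤ kl a w := by
      intro a
      rw [hkl a w]
      exact bern_pinsker (hQs01 a w) (hQf01 a w)
    have h1 := hpin true
    have h2 := hpin false
    simp only [hf]
    nlinarith [sq_nonneg ((Qs true w - Qf true w) + (Qs false w - Qf false w))]
  -- integrability of f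
  have hfm : Measurable f := by
    apply Measurable.pow_const
    exact ((hQfm true).sub (hQfm false)).sub ((hQsm true).sub (hQsm false))
  have hfint : Integrable f μ := by
    refine ⟨hfm.aestronglyMeasurable, ?_⟩
    apply MeasureTheory.HasFiniteIntegral.of_bounded (C := (16:ℝ))
    filter_upwards with w
    have h1 := hQf01 true w; have h2 := hQf01 false w
    have h3 := hQs01 true w; have h4 := hQs01 false w
    simp only [hf, Real.norm_eq_abs, abs_le]
    constructor <;> nlinarith [h1.1, h1.2, h2.1, h2.2, h3.1, h3.2, h4.1, h4.2]
  have hint_le : ∫ w, f w ∂μ ≤ LY := by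
    rw [hLY]
    exact integral_mono hfint hklint hpt
  have hd1 : (0:ℝ) < (d:ℝ) + 1 := by positivity
  have hLY_le : LY ≤ ((d:ℝ) + 1) * ε := by
    have : LY / ((d:ℝ) + 1) ≤ ε := by linarith
    rw [div_le_iff₀ hd1] at this
    linarith
  have h1 : ∫ w, f w ∂μ ≤ ((d:ℝ) + 1) * ε := le_trans hint_le hLY_le
  calc Real.sqrt (∫ w, f w ∂μ) ≤ Real.sqrt (((d:ℝ) + 1) * ε) :=
        Real.sqrt_le_sqrt h1
    _ ≤ 2 * Real.sqrt (((d:ℝ) + 1) * ε) := by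
        nlinarith [Real.sqrt_nonneg (((d:ℝ) + 1) * ε)]
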